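/- Let H_n denote the physicists' Hermite polynomials, H_n(x) = n! \sum_{k=0}^{\lfloor n/2 \rfloor} (-1)^k (2x)^{n-2k} / (k! (n-2k)!). Then the Feldheim linearization formula holds: for all i, j \in \mathbb{N} and all x, H_i(x) H_j(x) = \sum_{k=0}^{\min(i,j)} \binom{i}{k} \binom{j}{k} 2^k k! \, H_{i+j-2k}(x). -/

import Mathlib

open Finset

/-- The physicists' Hermite polynomial
`H_n(x) = n! ∑_{k=0}^{⌊n/2⌋} (-1)^k (2x)^{n-2k} / (k! (n-2k)!)`. -/
noncomputable def hermiteH (n : ℕ) (x : ℝ) : ℝ :=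
  (Nat.factorial n : ℝ) *
    ∑ k ∈ Finset.range (n / 2 + 1),
      (-1 : ℝ) ^ k * (2 * x) ^ (n - 2 * k) /
        ((Nat.factorial k : ℝ) * (Nat.factorial (n - 2 * k) : ℝ))

noncomputable def Tm (x : ℝ) (n k : ℕ) : ℝ :=
  (-1 : ℝ) ^ k * (2 * x) ^ (n - 2 * k) /
    ((Nat.factorial k : ℝ) * (Nat.factorial (n - 2 * k) : ℝ))

lemma hermiteH_eq (n : ℕ) (x : ℝ) :
    hermiteH n x = (Nat.factorial n : ℝ) * ∑ k ∈ Finset.range (n / 2 + 1), Tm x n k := rfl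

lemma Tm_succ (x : ℝ) (n k : ℕ) (h : 2 * k ≤ n) :
    2 * x * Tm x n k = ((n + 1 - 2 * k : ℕ) : ℝ) * Tm x (n + 1) k := by
  have e : n + 1 - 2 * k = (n - 2 * k) + 1 := by omega
  rw [Tm, Tm, e]
  generalize n - 2 * k = m
  rw [pow_succ, Nat.factorial_succ]
  have h1 : (Nat.factorial k : ℝ) ≠ 0 := by positivity
  have h2 : (Nat.factorial m : ℝ) ≠ 0 := by positivity
  have h3 : ((m : ℕ) : ℝ) + 1 ≠ 0 := by positivity
  push_cast
  field_simp

lemma Tm_shift (x : ℝ) (n k : ℕ) :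
    Tm x n k = -((k + 1 : ℕ) : ℝ) * Tm x (n + 2) (k + 1) := by
  have e : n + 2 - 2 * (k + 1) = n - 2 * k := by omega
  rw [Tm, Tm, e, Nat.factorial_succ, pow_succ]
  generalize n - 2 * k = m
  have h1 : (Nat.factorial k : ℝ) ≠ 0 := by positivity
  have h2 : (Nat.factorial m : ℝ) ≠ 0 := by positivity
  have h3 : ((k : ℕ) : ℝ) + 1 ≠ 0 := by positivity
  push_cast
  field_simp

lemma hermiteH_rec (n : ℕ) (x : ℝ) :
    hermiteH (n + 2) x = 2 * x * hermiteH (n + 1) x - 2 * ((n : ℝ) + 1) * hermiteH n x := by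
  rcases Nat.even_or_odd n with ⟨m, rfl⟩ | ⟨m, rfl⟩
  · -- n = m + m
    rw [hermiteH_eq, hermiteH_eq, hermiteH_eq,
      show (m + m + 2) / 2 + 1 = m + 2 by omega,
      show (m + m + 1) / 2 + 1 = m + 1 by omega,
      show (m + m) / 2 + 1 = m + 1 by omega]
    have hc2 : ((m + m + 2 : ℕ) : ℝ) = ((m + m : ℕ) : ℝ) + 2 := by push_cast; ring
    have key : (((m + m : ℕ) : ℝ) + 2) * ∑ k ∈ range (m + 2), Tm x (m + m + 2) k
        = (∑ k ∈ range (m + 1), ((m + m + 2 - 2 * k : ℕ) : ℝ) * Tm x (m + m + 2) k)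
          + 2 * ∑ k ∈ range (m + 1), ((k + 1 : ℕ) : ℝ) * Tm x (m + m + 2) (k + 1) := by
      rw [← hc2]
      have hs1 : ∑ k ∈ range (m + 2), ((m + m + 2 - 2 * k : ℕ) : ℝ) * Tm x (m + m + 2) k
          = ∑ k ∈ range (m + 1), ((m + m + 2 - 2 * k : ℕ) : ℝ) * Tm x (m + m + 2) k := by
        rw [Finset.sum_range_succ, show m + m + 2 - 2 * (m + 1) = 0 by omega]
        simp
      have hs2 : ∑ k ∈ range (m + 2), ((k : ℕ) : ℝ) * Tm x (m + m + 2) k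
          = ∑ k ∈ range (m + 1), ((k + 1 : ℕ) : ℝ) * Tm x (m + m + 2) (k + 1) := by
        rw [Finset.sum_range_succ' (fun k => ((k : ℕ) : ℝ) * Tm x (m + m + 2) k) (m + 1)]
        simp
      rw [← hs1, ← hs2, Finset.mul_sum, Finset.mul_sum, ← Finset.sum_add_distrib]
      apply Finset.sum_congr rfl
      intro k hk
      simp only [Finset.mem_range] at hk
      have h2k : 2 * k ≤ m + m + 2 := by omega
      rw [Nat.cast_sub h2k]
      push_cast
      ring
    have e1 : 2 * x * ((Nat.factorial (m + m + 1) : ℝ) * ∑ k ∈ range (m + 1), Tm x (m + m + 1) k)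
        = (Nat.factorial (m + m + 1) : ℝ)
            * ∑ k ∈ range (m + 1), ((m + m + 2 - 2 * k : ℕ) : ℝ) * Tm x (m + m + 2) k := by
      rw [mul_left_comm]
      congr 1
      rw [Finset.mul_sum]
      apply Finset.sum_congr rfl
      intro k hk
      simp only [Finset.mem_range] at hk
      exact Tm_succ x (m + m + 1) k (by omega)
    have e2 : (Nat.factorial (m + m) : ℝ) * ∑ k ∈ range (m + 1), Tm x (m + m) k
        = (Nat.factorial (m + m) : ℝ)
            * ∑ k ∈ range (m + 1), (-((k + 1 : ℕ) : ℝ) * Tm x (m + m + 2) (k + 1)) := by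
      congr 1
      exact Finset.sum_congr rfl fun k _ => Tm_shift x (m + m) k
    rw [e1, e2]
    have hC : ∑ k ∈ range (m + 1), (-((k + 1 : ℕ) : ℝ) * Tm x (m + m + 2) (k + 1))
        = -∑ k ∈ range (m + 1), ((k + 1 : ℕ) : ℝ) * Tm x (m + m + 2) (k + 1) := by
      rw [← Finset.sum_neg_distrib]
      simp only [neg_mul]
    rw [hC]
    have hF2 : (Nat.factorial (m + m + 2) : ℝ)
        = (((m + m : ℕ) : ℝ) + 2) * (Nat.factorial (m + m + 1) : ℝ) := by
      rw [Nat.factorial_succ]; push_cast; ring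
    have hF1 : (Nat.factorial (m + m + 1) : ℝ)
        = (((m + m : ℕ) : ℝ) + 1) * (Nat.factorial (m + m) : ℝ) := by
      rw [Nat.factorial_succ]; push_cast; ring
    linear_combination (∑ k ∈ range (m + 2), Tm x (m + m + 2) k) * hF2
      + (Nat.factorial (m + m + 1) : ℝ) * key
      + 2 * (∑ k ∈ range (m + 1), ((k + 1 : ℕ) : ℝ) * Tm x (m + m + 2) (k + 1)) * hF1
  · -- n = 2 * m + 1
    rw [hermiteH_eq, hermiteH_eq, hermiteH_eq,
      show (2 * m + 1 + 2) / 2 + 1 = m + 2 by omega,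
      show (2 * m + 1 + 1) / 2 + 1 = m + 2 by omega,
      show (2 * m + 1) / 2 + 1 = m + 1 by omega]
    have key : (((2 * m + 1 : ℕ) : ℝ) + 2) * ∑ k ∈ range (m + 2), Tm x (2 * m + 1 + 2) k
        = (∑ k ∈ range (m + 2), ((2 * m + 3 - 2 * k : ℕ) : ℝ) * Tm x (2 * m + 1 + 2) k)
          + 2 * ∑ k ∈ range (m + 1), ((k + 1 : ℕ) : ℝ) * Tm x (2 * m + 1 + 2) (k + 1) := by
      have hs2 : ∑ k ∈ range (m + 2), ((k : ℕ) : ℝ) * Tm x (2 * m + 1 + 2) k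
          = ∑ k ∈ range (m + 1), ((k + 1 : ℕ) : ℝ) * Tm x (2 * m + 1 + 2) (k + 1) := by
        rw [Finset.sum_range_succ' (fun k => ((k : ℕ) : ℝ) * Tm x (2 * m + 1 + 2) k) (m + 1)]
        simp
      rw [← hs2, Finset.mul_sum, Finset.mul_sum, ← Finset.sum_add_distrib]
      apply Finset.sum_congr rfl
      intro k hk
      simp only [Finset.mem_range] at hk
      have h2k : 2 * k ≤ 2 * m + 3 := by omega
      rw [Nat.cast_sub h2k]
      push_cast
      ring
    have e1 : 2 * x * ((Nat.factorial (2 * m + 1 + 1) : ℝ) * ∑ k ∈ range (m + 2), Tm x (2 * m + 1 + 1) k)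
        = (Nat.factorial (2 * m + 1 + 1) : ℝ)
            * ∑ k ∈ range (m + 2), ((2 * m + 3 - 2 * k : ℕ) : ℝ) * Tm x (2 * m + 1 + 2) k := by
      rw [mul_left_comm]
      congr 1
      rw [Finset.mul_sum]
      apply Finset.sum_congr rfl
      intro k hk
      simp only [Finset.mem_range] at hk
      have h := Tm_succ x (2 * m + 1 + 1) k (by omega)
      rw [show 2 * m + 1 + 1 + 1 - 2 * k = 2 * m + 3 - 2 * k by omega] at h
      exact h
    have e2 : (Nat.factorial (2 * m + 1) : ℝ) * ∑ k ∈ range (m + 1), Tm x (2 * m + 1) k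
        = (Nat.factorial (2 * m + 1) : ℝ)
            * ∑ k ∈ range (m + 1), (-((k + 1 : ℕ) : ℝ) * Tm x (2 * m + 1 + 2) (k + 1)) := by
      congr 1
      exact Finset.sum_congr rfl fun k _ => Tm_shift x (2 * m + 1) k
    rw [e1, e2]
    have hC : ∑ k ∈ range (m + 1), (-((k + 1 : ℕ) : ℝ) * Tm x (2 * m + 1 + 2) (k + 1))
        = -∑ k ∈ range (m + 1), ((k + 1 : ℕ) : ℝ) * Tm x (2 * m + 1 + 2) (k + 1) := by
      rw [← Finset.sum_neg_distrib]
      simp only [neg_mul]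
    rw [hC]
    have hF2 : (Nat.factorial (2 * m + 1 + 2) : ℝ)
        = (((2 * m + 1 : ℕ) : ℝ) + 2) * (Nat.factorial (2 * m + 1 + 1) : ℝ) := by
      rw [show 2 * m + 1 + 2 = (2 * m + 1 + 1) + 1 from rfl, Nat.factorial_succ]; push_cast; ring
    have hF1 : (Nat.factorial (2 * m + 1 + 1) : ℝ)
        = (((2 * m + 1 : ℕ) : ℝ) + 1) * (Nat.factorial (2 * m + 1) : ℝ) := by
      rw [Nat.factorial_succ]; push_cast; ring
    linear_combination (∑ k ∈ range (m + 2), Tm x (2 * m + 1 + 2) k) * hF2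
      + (Nat.factorial (2 * m + 1 + 1) : ℝ) * key
      + 2 * (∑ k ∈ range (m + 1), ((k + 1 : ℕ) : ℝ) * Tm x (2 * m + 1 + 2) (k + 1)) * hF1


lemma hermiteH_zero (x : ℝ) : hermiteH 0 x = 1 := by simp [hermiteH]

lemma hermiteH_one (x : ℝ) : hermiteH 1 x = 2 * x := by
  simp [hermiteH]

lemma two_mul_x (m : ℕ) (x : ℝ) :
    2 * x * hermiteH m x = hermiteH (m + 1) x + 2 * (m : ℝ) * hermiteH (m - 1) x := by
  cases m with
  | zero => simp [hermiteH_zero, hermiteH_one]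
  | succ m =>
    have h := hermiteH_rec m x
    rw [show m + 1 - 1 = m from rfl]
    push_cast
    linarith

def cc (i j k : ℕ) : ℕ := Nat.choose i k * Nat.choose j k * 2 ^ k * Nat.factorial k

lemma natkey (i j k : ℕ) (hk : 2 * k ≤ i + 1 + j) :
    cc (i + 2) j (k + 1) + 2 * (i + 1) * cc i j k
      = cc (i + 1) j (k + 1) + 2 * (i + 1 + j - 2 * k) * cc (i + 1) j k := by
  by_cases hj : k ≤ j
  · by_cases hki : k ≤ i + 1
    · obtain ⟨a, ha⟩ := Nat.le.dest hj
      obtain ⟨b, hb⟩ := Nat.le.dest hki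
      have hab : i + 1 + j - 2 * k = a + b := by omega
      have h1 : Nat.choose j (k + 1) * (k + 1) = Nat.choose j k * a := by
        rw [Nat.choose_succ_right_eq, show j - k = a by omega]
      have h2 : Nat.choose (i + 1) (k + 1) * (k + 1) = Nat.choose (i + 1) k * b := by
        rw [Nat.choose_succ_right_eq, show i + 1 - k = b by omega]
      have h3 : (i + 1) * Nat.choose i k = Nat.choose (i + 1) (k + 1) * (k + 1) :=
        Nat.add_one_mul_choose_eq i k
      have hp : Nat.choose (i + 2) (k + 1) = Nat.choose (i + 1) k + Nat.choose (i + 1) (k + 1) :=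
        Nat.choose_succ_succ (i + 1) k
      simp only [cc, hab, hp, pow_succ, Nat.factorial_succ]
      zify at h1 h2 h3 ⊢
      linear_combination ((Nat.choose (i + 1) k : ℤ) * 2 * 2 ^ k * Nat.factorial k) * h1
        + ((Nat.choose j k : ℤ) * 2 * 2 ^ k * Nat.factorial k) * h3
        + ((Nat.choose j k : ℤ) * 2 * 2 ^ k * Nat.factorial k) * h2
    · have e1 : Nat.choose i k = 0 := Nat.choose_eq_zero_of_lt (by omega)
      have e2 : Nat.choose (i + 1) k = 0 := Nat.choose_eq_zero_of_lt (by omega)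
      have e3 : Nat.choose (i + 1) (k + 1) = 0 := Nat.choose_eq_zero_of_lt (by omega)
      have e4 : Nat.choose (i + 2) (k + 1) = 0 := Nat.choose_eq_zero_of_lt (by omega)
      simp [cc, e1, e2, e3, e4]
  · have e1 : Nat.choose j k = 0 := Nat.choose_eq_zero_of_lt (by omega)
    have e2 : Nat.choose j (k + 1) = 0 := Nat.choose_eq_zero_of_lt (by omega)
    simp [cc, e1, e2]

lemma coefkey (i j k : ℕ) (hki : k ≤ i + 1) :
    (cc (i + 2) j (k + 1) : ℝ)
      = (cc (i + 1) j (k + 1) : ℝ)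
        + 2 * ((i + 1 + j - 2 * k : ℕ) : ℝ) * (cc (i + 1) j k : ℝ)
        - 2 * ((i : ℝ) + 1) * (cc i j k : ℝ) := by
  by_cases h : 2 * k ≤ i + 1 + j
  · have h' := congrArg (fun n : ℕ => (n : ℝ)) (natkey i j k h)
    push_cast at h'
    linarith
  · have hjk : j < k := by omega
    have e1 : Nat.choose j k = 0 := Nat.choose_eq_zero_of_lt hjk
    have e2 : Nat.choose j (k + 1) = 0 := Nat.choose_eq_zero_of_lt (by omega)
    simp [cc, e1, e2]

lemma T1 (i j k : ℕ) (x : ℝ) (hki : k ≤ i + 1) :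
    (cc (i + 1) j k : ℝ) * (2 * x * hermiteH (i + 1 + j - 2 * k) x)
      = (cc (i + 1) j k : ℝ) * hermiteH (i + j + 2 - 2 * k) x
        + 2 * ((i + 1 + j - 2 * k : ℕ) : ℝ) * (cc (i + 1) j k : ℝ)
            * hermiteH (i + j - 2 * k) x := by
  by_cases h : 2 * k ≤ i + 1 + j
  · have hm := two_mul_x (i + 1 + j - 2 * k) x
    rw [show i + 1 + j - 2 * k + 1 = i + j + 2 - 2 * k by omega,
      show i + 1 + j - 2 * k - 1 = i + j - 2 * k by omega] at hm
    rw [hm]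
    ring
  · have e1 : Nat.choose j k = 0 := Nat.choose_eq_zero_of_lt (by omega)
    simp [cc, e1]

lemma feld_aux : ∀ (i j : ℕ) (x : ℝ), hermiteH i x * hermiteH j x
    = ∑ k ∈ Finset.range (i + 1), (cc i j k : ℝ) * hermiteH (i + j - 2 * k) x := by
  intro i
  induction i using Nat.twoStepInduction with
  | zero =>
    intro j x
    simp [cc, hermiteH_zero]
  | one =>
    intro j x
    rw [hermiteH_one, Finset.sum_range_succ, Finset.sum_range_one,
      show 1 + j - 2 * 0 = j + 1 by omega, show 1 + j - 2 * 1 = j - 1 by omega,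
      show cc 1 j 0 = 1 by simp [cc], show cc 1 j 1 = 2 * j by simp [cc]; ring,
      two_mul_x j x]
    push_cast
    ring
  | more i IH1 IH2 =>
    intro j x
    have IH2' := IH2 j x
    rw [show i + 1 + 1 = i + 2 from rfl] at IH2'
    have IH1' := IH1 j x
    -- expand 2x * S(i+1)
    have hA : 2 * x * (∑ k ∈ range (i + 2), (cc (i + 1) j k : ℝ) * hermiteH (i + 1 + j - 2 * k) x)
        = (∑ k ∈ range (i + 2), (cc (i + 1) j k : ℝ) * hermiteH (i + j + 2 - 2 * k) x)
          + ∑ k ∈ range (i + 2),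
              2 * ((i + 1 + j - 2 * k : ℕ) : ℝ) * (cc (i + 1) j k : ℝ)
                * hermiteH (i + j - 2 * k) x := by
      rw [Finset.mul_sum, ← Finset.sum_add_distrib]
      apply Finset.sum_congr rfl
      intro k hk
      simp only [Finset.mem_range] at hk
      have t := T1 i j k x (by omega)
      linear_combination t
    have hA1 : ∑ k ∈ range (i + 2), (cc (i + 1) j k : ℝ) * hermiteH (i + j + 2 - 2 * k) x
        = hermiteH (i + j + 2) x
          + ∑ k ∈ range (i + 1), (cc (i + 1) j (k + 1) : ℝ) * hermiteH (i + j - 2 * k) x := by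
      rw [Finset.sum_range_succ'
        (fun k => (cc (i + 1) j k : ℝ) * hermiteH (i + j + 2 - 2 * k) x) (i + 1)]
      rw [add_comm]
      congr 1
      · rw [show i + j + 2 - 2 * 0 = i + j + 2 by omega, show cc (i + 1) j 0 = 1 by simp [cc]]
        simp
      · apply Finset.sum_congr rfl
        intro k hk
        rw [show i + j + 2 - 2 * (k + 1) = i + j - 2 * k by omega]
    have hA1' : ∑ k ∈ range (i + 2), (cc (i + 1) j (k + 1) : ℝ) * hermiteH (i + j - 2 * k) x
        = ∑ k ∈ range (i + 1), (cc (i + 1) j (k + 1) : ℝ) * hermiteH (i + j - 2 * k) x := by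
      rw [Finset.sum_range_succ]
      have h0 : cc (i + 1) j (i + 1 + 1) = 0 := by
        have : Nat.choose (i + 1) (i + 1 + 1) = 0 := Nat.choose_eq_zero_of_lt (by omega)
        simp [cc, this]
      rw [h0]
      simp
    have hC' : ∑ k ∈ range (i + 2), (cc i j k : ℝ) * hermiteH (i + j - 2 * k) x
        = ∑ k ∈ range (i + 1), (cc i j k : ℝ) * hermiteH (i + j - 2 * k) x := by
      rw [Finset.sum_range_succ]
      have h0 : cc i j (i + 1) = 0 := by
        have : Nat.choose i (i + 1) = 0 := Nat.choose_eq_zero_of_lt (by omega)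
        simp [cc, this]
      rw [h0]
      simp
    have hT : ∑ k ∈ range (i + 2 + 1), (cc (i + 2) j k : ℝ) * hermiteH (i + 2 + j - 2 * k) x
        = hermiteH (i + j + 2) x
          + ∑ k ∈ range (i + 2), (cc (i + 2) j (k + 1) : ℝ) * hermiteH (i + j - 2 * k) x := by
      rw [Finset.sum_range_succ'
        (fun k => (cc (i + 2) j k : ℝ) * hermiteH (i + 2 + j - 2 * k) x) (i + 2)]
      rw [add_comm]
      congr 1
      · rw [show i + 2 + j - 2 * 0 = i + j + 2 by omega, show cc (i + 2) j 0 = 1 by simp [cc]]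
        simp
      · apply Finset.sum_congr rfl
        intro k hk
        rw [show i + 2 + j - 2 * (k + 1) = i + j - 2 * k by omega]
    have hfin : ∑ k ∈ range (i + 2), (cc (i + 2) j (k + 1) : ℝ) * hermiteH (i + j - 2 * k) x
        = (∑ k ∈ range (i + 2), (cc (i + 1) j (k + 1) : ℝ) * hermiteH (i + j - 2 * k) x)
          + (∑ k ∈ range (i + 2),
              2 * ((i + 1 + j - 2 * k : ℕ) : ℝ) * (cc (i + 1) j k : ℝ)
                * hermiteH (i + j - 2 * k) x)
          - 2 * ((i : ℝ) + 1)
            * ∑ k ∈ range (i + 2), (cc i j k : ℝ) * hermiteH (i + j - 2 * k) x := by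
      rw [Finset.mul_sum, ← Finset.sum_add_distrib, ← Finset.sum_sub_distrib]
      apply Finset.sum_congr rfl
      intro k hk
      simp only [Finset.mem_range] at hk
      have t := coefkey i j k (by omega)
      linear_combination (hermiteH (i + j - 2 * k) x) * t
    have hrec := hermiteH_rec i x
    calc hermiteH (i + 2) x * hermiteH j x
        = 2 * x * (hermiteH (i + 1) x * hermiteH j x)
            - 2 * ((i : ℝ) + 1) * (hermiteH i x * hermiteH j x) := by rw [hrec]; ring
      _ = 2 * x * (∑ k ∈ range (i + 2), (cc (i + 1) j k : ℝ) * hermiteH (i + 1 + j - 2 * k) x)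
            - 2 * ((i : ℝ) + 1)
              * ∑ k ∈ range (i + 1), (cc i j k : ℝ) * hermiteH (i + j - 2 * k) x := by
          rw [IH2', IH1']
      _ = ∑ k ∈ range (i + 2 + 1), (cc (i + 2) j k : ℝ) * hermiteH (i + 2 + j - 2 * k) x := by
          rw [hA, hA1, ← hA1', ← hC', hT, hfin]
          ring

/-- Feldheim linearization formula for Hermite polynomials:
`H_i(x) H_j(x) = ∑_{k=0}^{min(i,j)} (i choose k)(j choose k) 2^k k! H_{i+j-2k}(x)`. -/
theorem hermite_feldheim (i j : ℕ) (x : ℝ) :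
    hermiteH i x * hermiteH j x =
      ∑ k ∈ Finset.range (min i j + 1),
        (i.choose k : ℝ) * (j.choose k : ℝ) * 2 ^ k * (Nat.factorial k : ℝ) *
          hermiteH (i + j - 2 * k) x := by
  rw [feld_aux i j x]
  have hsub : Finset.range (min i j + 1) ⊆ Finset.range (i + 1) := by
    apply Finset.range_subset_range.mpr
    omega
  rw [← Finset.sum_subset hsub]
  · apply Finset.sum_congr rfl
    intro k hk
    simp only [cc]
    push_cast
    ring
  · intro k hk hk'
    simp only [Finset.mem_range] at hk hk'
    have : j < k := by omega
    simp [cc, Nat.choose_eq_zero_of_lt this]
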